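/- For all integers r ≥ 1 and 1 ≤ k ≤ r, the number of pairs of permutations (π, π') ∈ S_r × S_r with LCS(π, π') ≥ k is at most (r!)² · C(r,k) / k!, where C(r,k) is the binomial coefficient. Equivalently, if π, π' ∈ S_r are chosen independently and uniformly at random, then P(LCS(π, π') ≥ k) ≤ C(r,k)/k!. -/

import Mathlib

/-- `LCS(π, π')`: the length of a longest common subsequence of the permutations
`π, π'` of `[r]`, i.e. the largest `ℓ` for which there are `A = {a_1 < … < a_ℓ}` and
`B = {b_1 < … < b_ℓ}` (not necessarily disjoint) with `π(a_t) = π'(b_t)` for all `t`. -/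
noncomputable def permLCS {r : ℕ} (π π' : Equiv.Perm (Fin r)) : ℕ :=
  sSup {ℓ : ℕ | ∃ a b : Fin ℓ → Fin r, StrictMono a ∧ StrictMono b ∧
    ∀ t : Fin ℓ, π (a t) = π' (b t)}

private lemma strictMono_eq_of_image_eq' {k r : ℕ} {f g : Fin k → Fin r}
    (hf : StrictMono f) (hg : StrictMono g)
    (h : Finset.image f Finset.univ = Finset.image g Finset.univ) : f = g := by
  have hcard : (Finset.image f Finset.univ).card = k := by
    rw [Finset.card_image_of_injective _ hf.injective, Finset.card_univ, Fintype.card_fin]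
  have h1 : f = (Finset.image f Finset.univ).orderEmbOfFin hcard :=
    Finset.orderEmbOfFin_unique hcard (fun i => Finset.mem_image_of_mem _ (Finset.mem_univ i)) hf
  have hcard' : (Finset.image f Finset.univ).card = k := hcard
  have h2 : g = (Finset.image f Finset.univ).orderEmbOfFin hcard := by
    apply Finset.orderEmbOfFin_unique hcard _ hg
    intro i
    rw [h]
    exact Finset.mem_image_of_mem _ (Finset.mem_univ i)
  rw [h1, h2]

/-- Extraction: if `k ≤ permLCS π π'` then there is a common subsequence of length `k`. -/
private lemma exists_of_le_permLCS {r k : ℕ} (π π' : Equiv.Perm (Fin r))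
    (h : k ≤ permLCS π π') :
    ∃ a b : Fin k → Fin r, StrictMono a ∧ StrictMono b ∧
      ∀ t : Fin k, π (a t) = π' (b t) := by
  set S := {ℓ : ℕ | ∃ a b : Fin ℓ → Fin r, StrictMono a ∧ StrictMono b ∧
    ∀ t : Fin ℓ, π (a t) = π' (b t)} with hS
  have h0 : (0 : ℕ) ∈ S :=
    ⟨Fin.elim0, Fin.elim0, fun x => x.elim0, fun x => x.elim0, fun t => t.elim0⟩
  have hbdd : BddAbove S := by
    refine ⟨r, fun ℓ hℓ => ?_⟩
    obtain ⟨a, b, ha, hb, hab⟩ := hℓ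
    have := Fintype.card_le_of_injective a ha.injective
    simpa using this
  have hmem : sSup S ∈ S := Nat.sSup_mem ⟨0, h0⟩ hbdd
  obtain ⟨a, b, ha, hb, hab⟩ := hmem
  have hk : k ≤ sSup S := h
  exact ⟨a ∘ Fin.castLE hk, b ∘ Fin.castLE hk, ha.comp (Fin.strictMono_castLE hk),
    hb.comp (Fin.strictMono_castLE hk), fun t => hab _⟩

open Classical in
/-- For `1 ≤ k ≤ r`, the number of pairs `(π, π') ∈ S_r × S_r` with
`LCS(π, π') ≥ k` is at most `(r!)² · C(r,k) / k!`. -/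
theorem count_pairs_large_LCS (r k : ℕ) (hk : 1 ≤ k) (hkr : k ≤ r) :
    ((Finset.univ.filter fun p : Equiv.Perm (Fin r) × Equiv.Perm (Fin r) =>
        k ≤ permLCS p.1 p.2).card : ℝ) ≤
      (r.factorial : ℝ) ^ 2 * (r.choose k) / (k.factorial : ℝ) := by
  classical
  set A : Finset ((Fin k → Fin r) × (Fin k → Fin r)) :=
    Finset.univ.filter fun ab => StrictMono ab.1 ∧ StrictMono ab.2 with hAdef
  set E : (Fin k → Fin r) × (Fin k → Fin r) →
      Finset (Equiv.Perm (Fin r) × Equiv.Perm (Fin r)) :=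
    fun ab => Finset.univ.filter fun p => ∀ t, p.1 (ab.1 t) = p.2 (ab.2 t) with hEdef
  -- union bound
  have hsub : (Finset.univ.filter fun p : Equiv.Perm (Fin r) × Equiv.Perm (Fin r) =>
      k ≤ permLCS p.1 p.2) ⊆ A.biUnion E := by
    intro p hp
    rw [Finset.mem_filter] at hp
    obtain ⟨a, b, ha, hb, hab⟩ := exists_of_le_permLCS p.1 p.2 hp.2
    refine Finset.mem_biUnion.2 ⟨(a, b), ?_, ?_⟩
    · simp only [hAdef, Finset.mem_filter, Finset.mem_univ, true_and]
      exact ⟨ha, hb⟩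
    · simp only [hEdef, Finset.mem_filter, Finset.mem_univ, true_and]
      exact hab
  -- count A
  have hA : A.card ≤ r.choose k ^ 2 := by
    rw [← Fintype.card_coe]
    let F : ↥A → {s : Finset (Fin r) // s.card = k} × {s : Finset (Fin r) // s.card = k} :=
      fun x =>
        (⟨Finset.image x.1.1 Finset.univ, by
          rw [Finset.card_image_of_injective _ (Finset.mem_filter.1 x.2).2.1.injective,
            Finset.card_univ, Fintype.card_fin]⟩,
        ⟨Finset.image x.1.2 Finset.univ, by
          rw [Finset.card_image_of_injective _ (Finset.mem_filter.1 x.2).2.2.injective,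
            Finset.card_univ, Fintype.card_fin]⟩)
    have hF : Function.Injective F := by
      intro x y hxy
      have hx := Finset.mem_filter.1 x.2
      have hy := Finset.mem_filter.1 y.2
      have h1 : Finset.image x.1.1 Finset.univ = Finset.image y.1.1 Finset.univ :=
        congrArg Subtype.val (congrArg Prod.fst hxy)
      have h2 : Finset.image x.1.2 Finset.univ = Finset.image y.1.2 Finset.univ :=
        congrArg Subtype.val (congrArg Prod.snd hxy)
      apply Subtype.ext
      exact Prod.ext (strictMono_eq_of_image_eq' hx.2.1 hy.2.1 h1)
        (strictMono_eq_of_image_eq' hx.2.2 hy.2.2 h2)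
    calc Fintype.card ↥A ≤ Fintype.card ({s : Finset (Fin r) // s.card = k} ×
        {s : Finset (Fin r) // s.card = k}) := Fintype.card_le_of_injective F hF
      _ = r.choose k ^ 2 := by
          rw [Fintype.card_prod, Fintype.card_finset_len, Fintype.card_fin, sq]
  -- count each E
  have hE : ∀ ab ∈ A, (E ab).card ≤ r.factorial * (r - k).factorial := by
    rintro ⟨a, b⟩ habA
    rw [hAdef, Finset.mem_filter] at habA
    obtain ⟨-, ha, hb⟩ := habA
    set T : Finset (Equiv.Perm (Fin r)) :=
      Finset.univ.filter fun σ => ∀ t, σ (a t) = b t with hTdef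
    -- T.card ≤ (r-k)!
    have hT : T.card ≤ (r - k).factorial := by
      set Ac : Finset (Fin r) := (Finset.image a Finset.univ)ᶜ with hAc
      set Bc : Finset (Fin r) := (Finset.image b Finset.univ)ᶜ with hBc
      have hAcard : (Finset.image a Finset.univ).card = k := by
        rw [Finset.card_image_of_injective _ ha.injective, Finset.card_univ, Fintype.card_fin]
      have hBcard : (Finset.image b Finset.univ).card = k := by
        rw [Finset.card_image_of_injective _ hb.injective, Finset.card_univ, Fintype.card_fin]
      let G : ↥T → (↥Ac ↪ ↥Bc) := fun σ =>
        ⟨fun x => ⟨σ.1 x.1, by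
          have hσ : ∀ t, σ.1 (a t) = b t := (Finset.mem_filter.1 σ.2).2
          refine Finset.mem_compl.2 fun hmem => ?_
          obtain ⟨t, -, ht⟩ := Finset.mem_image.1 hmem
          have h1 : σ.1 (a t) = σ.1 x.1 := by rw [hσ t, ht]
          have hx : (a t) = x.1 := σ.1.injective h1
          exact (Finset.mem_compl.1 x.2)
            (Finset.mem_image.2 ⟨t, Finset.mem_univ t, hx⟩)⟩,
        fun x y hxy => Subtype.ext (σ.1.injective (congrArg Subtype.val hxy))⟩
      have hG : Function.Injective G := by
        intro σ τ hστ
        have hσ : ∀ t, σ.1 (a t) = b t := (Finset.mem_filter.1 σ.2).2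
        have hτ : ∀ t, τ.1 (a t) = b t := (Finset.mem_filter.1 τ.2).2
        apply Subtype.ext
        apply Equiv.ext
        intro x
        by_cases hx : x ∈ Finset.image a Finset.univ
        · obtain ⟨t, -, ht⟩ := Finset.mem_image.1 hx
          rw [← ht, hσ t, hτ t]
        · have hxc : x ∈ Ac := Finset.mem_compl.2 hx
          have := congrArg (fun e : ↥Ac ↪ ↥Bc => (e ⟨x, hxc⟩ : ↥Bc).1) hστ
          exact this
      have hcA : Fintype.card ↥Ac = r - k := by
        rw [Fintype.card_coe, hAc, Finset.card_compl, hAcard, Fintype.card_fin]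
      have hcB : Fintype.card ↥Bc = r - k := by
        rw [Fintype.card_coe, hBc, Finset.card_compl, hBcard, Fintype.card_fin]
      calc T.card = Fintype.card ↥T := (Fintype.card_coe T).symm
        _ ≤ Fintype.card (↥Ac ↪ ↥Bc) := Fintype.card_le_of_injective G hG
        _ = (r - k).factorial := by
            rw [Fintype.card_embedding_eq, hcA, hcB, Nat.descFactorial_self]
    -- (E ab).card ≤ r! * T.card
    have hET : (E (a, b)).card ≤ r.factorial * T.card := by
      let F : ↥(E (a, b)) → Equiv.Perm (Fin r) × ↥T := fun p =>
        (p.1.2, ⟨p.1.2⁻¹ * p.1.1, by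
          have hp : ∀ t, p.1.1 (a t) = p.1.2 (b t) := (Finset.mem_filter.1 p.2).2
          refine Finset.mem_filter.2 ⟨Finset.mem_univ _, fun t => ?_⟩
          rw [Equiv.Perm.mul_apply, hp t, Equiv.Perm.inv_def, Equiv.symm_apply_apply]⟩)
      have hF : Function.Injective F := by
        intro p q hpq
        have h2 : p.1.2 = q.1.2 := congrArg Prod.fst hpq
        have h1 : p.1.2⁻¹ * p.1.1 = q.1.2⁻¹ * q.1.1 :=
          congrArg Subtype.val (congrArg Prod.snd hpq)
        apply Subtype.ext
        have : p.1.1 = q.1.1 := by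
          have := congrArg (fun σ => p.1.2 * σ) h1
          simpa [h2, mul_assoc] using this
        exact Prod.ext this h2
      calc (E (a, b)).card = Fintype.card ↥(E (a, b)) := (Fintype.card_coe _).symm
        _ ≤ Fintype.card (Equiv.Perm (Fin r) × ↥T) := Fintype.card_le_of_injective F hF
        _ = r.factorial * T.card := by
            rw [Fintype.card_prod, Fintype.card_perm, Fintype.card_fin, Fintype.card_coe]
    exact hET.trans (Nat.mul_le_mul_left _ hT)
  -- combine
  have hnat : (Finset.univ.filter fun p : Equiv.Perm (Fin r) × Equiv.Perm (Fin r) =>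
      k ≤ permLCS p.1 p.2).card ≤ r.choose k ^ 2 * (r.factorial * (r - k).factorial) := by
    calc (Finset.univ.filter fun p : Equiv.Perm (Fin r) × Equiv.Perm (Fin r) =>
        k ≤ permLCS p.1 p.2).card ≤ (A.biUnion E).card := Finset.card_le_card hsub
      _ ≤ ∑ ab ∈ A, (E ab).card := Finset.card_biUnion_le
      _ ≤ A.card * (r.factorial * (r - k).factorial) := by
          have := Finset.sum_le_card_nsmul A (fun ab => (E ab).card)
            (r.factorial * (r - k).factorial) hE
          simpa [smul_eq_mul] using this
      _ ≤ r.choose k ^ 2 * (r.factorial * (r - k).factorial) :=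
          Nat.mul_le_mul_right _ hA
  have key : r.choose k ^ 2 * (r.factorial * (r - k).factorial) * k.factorial =
      r.factorial ^ 2 * r.choose k := by
    have hcf := Nat.choose_mul_factorial_mul_factorial hkr
    calc r.choose k ^ 2 * (r.factorial * (r - k).factorial) * k.factorial
        = (r.choose k * k.factorial * (r - k).factorial) * (r.choose k * r.factorial) := by ring
      _ = r.factorial * (r.choose k * r.factorial) := by rw [hcf]
      _ = r.factorial ^ 2 * r.choose k := by ring
  have hkpos : (0 : ℝ) < (k.factorial : ℝ) := by positivity
  rw [le_div_iff₀ hkpos]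
  have : ((Finset.univ.filter fun p : Equiv.Perm (Fin r) × Equiv.Perm (Fin r) =>
      k ≤ permLCS p.1 p.2).card) * k.factorial ≤ r.factorial ^ 2 * r.choose k := by
    calc (Finset.univ.filter fun p : Equiv.Perm (Fin r) × Equiv.Perm (Fin r) =>
        k ≤ permLCS p.1 p.2).card * k.factorial
        ≤ r.choose k ^ 2 * (r.factorial * (r - k).factorial) * k.factorial :=
          Nat.mul_le_mul_right _ hnat
      _ = r.factorial ^ 2 * r.choose k := key
  exact_mod_cast this
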